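/- Hermite reduction: Let K be a field of characteristic zero and D a derivation on the polynomial ring K[t] mapping K into K; extend D to the fraction field K(t). Let a, b ∈ K[t] with b monic, a and b coprime, and assume every nonconstant irreducible factor p of b is normal, i.e., p and Dp are coprime. Then there exist g ∈ K(t) and polynomials q, a₁, b₁ ∈ K[t] with b₁ monic, squarefree, b₁ dividing b, and deg(a₁) < deg(b₁), such that a/b = D(g) + q + a₁/b₁ in K(t). -/

import Mathlib

open Polynomial


set_option linter.unusedSectionVars false
set_option maxHeartbeats 1000000

namespace HermiteRed

variable {K : Type} [Field K] [CharZero K]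

section DF
variable (DF : RatFunc K → RatFunc K)
  (hDFadd : ∀ f g : RatFunc K, DF (f + g) = DF f + DF g)
  (hDFmul : ∀ f g : RatFunc K, DF (f * g) = f * DF g + g * DF f)

include hDFadd in
lemma DF_zero : DF 0 = 0 := by
  have h := hDFadd 0 0
  simp only [add_zero] at h
  exact (left_eq_add.mp h)

include hDFmul in
lemma DF_one : DF 1 = 0 := by
  have h := hDFmul 1 1
  simp only [mul_one, one_mul] at h
  exact (left_eq_add.mp h)

include hDFadd in
lemma DF_neg (f : RatFunc K) : DF (-f) = - DF f := by
  have h := hDFadd f (-f)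
  simp only [add_neg_cancel, DF_zero DF hDFadd] at h
  exact eq_neg_of_add_eq_zero_right h.symm

include hDFadd hDFmul in
lemma DF_pow (f : RatFunc K) (m : ℕ) :
    DF (f ^ (m + 1)) = ((m + 1 : ℕ) : RatFunc K) * f ^ m * DF f := by
  induction m with
  | zero => simp
  | succ k ih =>
    have h : f ^ (k + 2) = f * f ^ (k + 1) := by ring
    rw [h, hDFmul, ih]
    push_cast
    ring

include hDFmul in
lemma DF_inv (f : RatFunc K) (hf : f ≠ 0) : DF f⁻¹ = - DF f / f ^ 2 := by
  have h1 : f * f⁻¹ = 1 := mul_inv_cancel₀ hf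
  have h2 := hDFmul f f⁻¹
  rw [h1, DF_one DF hDFmul] at h2
  rw [eq_div_iff (pow_ne_zero 2 hf)]
  linear_combination (-f) * h2 + (- DF f) * (mul_inv_cancel₀ hf)

include hDFadd hDFmul in
lemma DF_div_pow (f h : RatFunc K) (hh : h ≠ 0) (m : ℕ) :
    DF (f / h ^ (m + 1)) =
      DF f / h ^ (m + 1) -
        ((m + 1 : ℕ) : RatFunc K) * f * DF h / h ^ (m + 2) := by
  have hpow : h ^ (m + 1) ≠ 0 := pow_ne_zero _ hh
  have h1 : f / h ^ (m + 1) = f * (h ^ (m + 1))⁻¹ := by ring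
  rw [h1, hDFmul, DF_inv DF hDFmul _ hpow, DF_pow DF hDFadd hDFmul]
  field_simp
  ring

end DF

section D
variable (D : Polynomial K → Polynomial K)
  (hDadd : ∀ p q : Polynomial K, D (p + q) = D p + D q)
  (hDmul : ∀ p q : Polynomial K, D (p * q) = p * D q + q * D p)

include hDadd in
lemma D_zero : D 0 = 0 := by
  have h := hDadd 0 0
  simp only [add_zero] at h
  exact (left_eq_add.mp h)

include hDmul in
lemma D_one : D 1 = 0 := by
  have h := hDmul 1 1
  simp only [mul_one, one_mul] at h
  exact (left_eq_add.mp h)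

include hDadd hDmul in
lemma D_natCast (n : ℕ) : D ((n : Polynomial K)) = 0 := by
  induction n with
  | zero => simpa using D_zero D hDadd
  | succ k ih =>
    push_cast
    rw [hDadd, ih, D_one D hDmul, add_zero]

include hDadd hDmul in
lemma D_C_nat_inv (n : ℕ) : D (C (((n : K))⁻¹)) = 0 := by
  rcases Nat.eq_zero_or_pos n with h0 | hpos
  · subst h0
    simpa using D_zero D hDadd
  · have hn : ((n : K)) ≠ 0 := Nat.cast_ne_zero.mpr hpos.ne'
    have hC : C ((n : K)) * C (((n : K))⁻¹) = 1 := by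
      rw [← C_mul, mul_inv_cancel₀ hn, C_1]
    have h2 := hDmul (C ((n : K))) (C (((n : K))⁻¹))
    have hCn : D (C ((n : K))) = 0 := by
      rw [map_natCast (C : K →+* Polynomial K) n]
      exact D_natCast D hDadd hDmul n
    rw [hC, D_one D hDmul, hCn, mul_zero, add_zero] at h2
    have hCne : (C ((n : K)) : Polynomial K) ≠ 0 := by
      simpa using hn
    exact (mul_eq_zero.mp h2.symm).resolve_left hCne

end D

lemma aux
    (D : Polynomial K → Polynomial K)
    (hDadd : ∀ p q : Polynomial K, D (p + q) = D p + D q)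
    (hDmul : ∀ p q : Polynomial K, D (p * q) = p * D q + q * D p)
    (DF : RatFunc K → RatFunc K)
    (hDFadd : ∀ f g : RatFunc K, DF (f + g) = DF f + DF g)
    (hDFmul : ∀ f g : RatFunc K, DF (f * g) = f * DF g + g * DF f)
    (hDFext : ∀ p : Polynomial K,
      DF (algebraMap (Polynomial K) (RatFunc K) p) =
        algebraMap (Polynomial K) (RatFunc K) (D p)) :
    ∀ N : ℕ, ∀ b : Polynomial K, b.natDegree ≤ N → ∀ a : Polynomial K, b.Monic →
    (∀ p : Polynomial K, Irreducible p → 0 < p.degree → p ∣ b → IsCoprime p (D p)) →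
    ∃ (g : RatFunc K) (q a₁ b₁ : Polynomial K),
      b₁.Monic ∧ Squarefree b₁ ∧ b₁ ∣ b ∧ a₁.degree < b₁.degree ∧
      algebraMap (Polynomial K) (RatFunc K) a / algebraMap (Polynomial K) (RatFunc K) b =
        DF g + algebraMap (Polynomial K) (RatFunc K) q +
          algebraMap (Polynomial K) (RatFunc K) a₁ /
            algebraMap (Polynomial K) (RatFunc K) b₁ := by
  intro N
  induction N using Nat.strong_induction_on with
  | _ N IH =>
  intro b hbN a hb hnorm
  by_cases hsf : Squarefree b
  · -- base case: b squarefree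
    refine ⟨0, a /ₘ b, a %ₘ b, b, hb, hsf, dvd_rfl, degree_modByMonic_lt a hb, ?_⟩
    have hbne : algebraMap (Polynomial K) (RatFunc K) b ≠ 0 :=
      RatFunc.algebraMap_ne_zero hb.ne_zero
    have key : algebraMap (Polynomial K) (RatFunc K) a
        = algebraMap (Polynomial K) (RatFunc K) (a %ₘ b)
          + algebraMap (Polynomial K) (RatFunc K) b
            * algebraMap (Polynomial K) (RatFunc K) (a /ₘ b) := by
      rw [← map_mul, ← map_add, modByMonic_add_div a b]
    rw [DF_zero DF hDFadd, key]
    field_simp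
    ring
  · -- inductive step
    classical
    have hb0 : b ≠ 0 := hb.ne_zero
    rw [squarefree_iff_no_irreducibles hb0] at hsf
    push_neg at hsf
    obtain ⟨p₀, hp₀irr, hp₀dvd⟩ := hsf
    set p := normalize p₀ with hpdef
    have hassoc : Associated p₀ p := (normalize_associated p₀).symm
    have hpirr : Irreducible p := hassoc.irreducible hp₀irr
    have hpm : p.Monic := monic_normalize hp₀irr.ne_zero
    have hp0 : p ≠ 0 := hpm.ne_zero
    have hppdvd : p * p ∣ b :=
      (mul_dvd_mul hassoc.symm.dvd hassoc.symm.dvd).trans hp₀dvd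
    have hfin : FiniteMultiplicity p b :=
      FiniteMultiplicity.of_not_isUnit hpirr.not_isUnit hb0
    have hn2 : 2 ≤ multiplicity p b :=
      hfin.le_multiplicity_of_pow_dvd (by rw [sq]; exact hppdvd)
    obtain ⟨c, hbc, hpc⟩ := hfin.exists_eq_pow_mul_and_not_dvd
    obtain ⟨m, hm⟩ : ∃ m : ℕ, multiplicity p b = m + 2 :=
      ⟨multiplicity p b - 2, by omega⟩
    rw [hm] at hbc
    -- b = p ^ (m + 2) * c,  ¬ p ∣ c
    have hcm : c.Monic := (hpm.pow (m + 2)).of_mul_monic_left (hbc ▸ hb)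
    have hc0 : c ≠ 0 := hcm.ne_zero
    have hpdeg : 0 < p.degree := degree_pos_of_irreducible hpirr
    have hpnd : 0 < p.natDegree := natDegree_pos_iff_degree_pos.mpr hpdeg
    have hpdvdb : p ∣ b := dvd_trans (dvd_mul_right p p) hppdvd
    have hDp : IsCoprime p (D p) := hnorm p hpirr hpdeg hpdvdb
    have hIc : IsCoprime p c := (hpirr.coprime_iff_not_dvd).mpr hpc
    have hcop : IsCoprime p (c * D p) := hIc.mul_right hDp
    obtain ⟨x, y, hxy⟩ := hcop
    set u := a * y with hu
    set v := a * x with hv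
    have ha : u * (c * D p) + v * p = a := by
      rw [hu, hv]; linear_combination a * hxy
    set μ : K := ((m + 1 : ℕ) : K) with hμdef
    have hμ0 : μ ≠ 0 := Nat.cast_ne_zero.mpr (Nat.succ_ne_zero m)
    set w : Polynomial K := C μ⁻¹ * u with hw
    set a' : Polynomial K := C μ⁻¹ * (D u * c) + v with ha'
    set b' : Polynomial K := p ^ (m + 1) * c with hb'
    have hb'm : b'.Monic := (hpm.pow (m + 1)).mul hcm
    have hb'dvd : b' ∣ b := by
      rw [hbc, hb']
      exact mul_dvd_mul (pow_dvd_pow p (by omega)) dvd_rfl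
    have hlt : b'.natDegree < b.natDegree := by
      rw [hb', hbc, natDegree_mul (pow_ne_zero _ hp0) hc0,
        natDegree_mul (pow_ne_zero _ hp0) hc0, natDegree_pow, natDegree_pow]
      have : (m + 1) * p.natDegree < (m + 2) * p.natDegree := by
        exact (Nat.mul_lt_mul_right hpnd).mpr (by omega)
      omega
    obtain ⟨g₁, q, a₁, b₁, h1, h2, h3, h4, heq⟩ :=
      IH b'.natDegree (lt_of_lt_of_le hlt hbN) b' le_rfl a' hb'm
        (fun r hr hdr hrb' => hnorm r hr hdr (hrb'.trans hb'dvd))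
    set A := algebraMap (Polynomial K) (RatFunc K) with hA
    set g₀ : RatFunc K := -(A w / (A p) ^ (m + 1)) with hg₀
    refine ⟨g₀ + g₁, q, a₁, b₁, h1, h2, h3.trans hb'dvd, h4, ?_⟩
    have hP0 : A p ≠ 0 := RatFunc.algebraMap_ne_zero hp0
    have hC0 : A c ≠ 0 := RatFunc.algebraMap_ne_zero hc0
    have h1' : ((m + 1 : ℕ) : RatFunc K) = A (C μ) := by
      rw [hμdef, map_natCast (C : K →+* Polynomial K) (m + 1),
        map_natCast A (m + 1)]
    obtain ⟨M, hMdef⟩ : ∃ M : RatFunc K, M = ((m + 1 : ℕ) : RatFunc K) := ⟨_, rfl⟩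
    have hM0 : M ≠ 0 := by
      rw [hMdef, h1']
      exact RatFunc.algebraMap_ne_zero (by simpa using hμ0)
    have hCμ : A (C μ⁻¹) = M⁻¹ := by
      apply eq_inv_of_mul_eq_one_left
      rw [hMdef, h1', ← map_mul, ← C_mul, inv_mul_cancel₀ hμ0, C_1, map_one]
    have hDw : D w = C μ⁻¹ * D u := by
      rw [hw, hDmul, D_C_nat_inv D hDadd hDmul (m + 1), mul_zero, add_zero]
    have hDFg₀ : DF g₀ =
        -(A (C μ⁻¹ * D u) / (A p) ^ (m + 1) -
          M * A w * A (D p) / (A p) ^ (m + 2)) := by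
      rw [hg₀, DF_neg DF hDFadd, DF_div_pow DF hDFadd hDFmul (A w) (A p) hP0 m,
        hDFext, hDFext, hDw, ← hMdef]
    -- the main identity
    have hmain : A a / A b = DF g₀ + A a' / A b' := by
      rw [hDFg₀]
      have hAa : A a = A u * (A c * A (D p)) + A v * A p := by
        rw [← map_mul, ← map_mul, ← map_mul, ← map_add, ha]
      have hAb : A b = (A p) ^ (m + 2) * A c := by
        rw [hbc, map_mul, map_pow]
      have hAa' : A a' = A (D u) * A c / M + A v := by
        rw [ha', map_add, map_mul, map_mul, hCμ, inv_mul_eq_div]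
      have hAb' : A b' = (A p) ^ (m + 1) * A c := by
        rw [hb', map_mul, map_pow]
      have hAw : A w = A u / M := by
        rw [hw, map_mul, hCμ, inv_mul_eq_div]
      have hACDu : A (C μ⁻¹ * D u) = A (D u) / M := by
        rw [map_mul, hCμ, inv_mul_eq_div]
      rw [hAa, hAb, hAa', hAb', hAw, hACDu]
      have hsplit : (A p) ^ (m + 2) = (A p) ^ (m + 1) * A p := by ring
      rw [hsplit]
      have hQ0 : (A p) ^ (m + 1) ≠ 0 := pow_ne_zero _ hP0
      generalize hQ : (A p) ^ (m + 1) = Q at hQ0 ⊢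
      field_simp
      ring
    calc A a / A b = DF g₀ + A a' / A b' := hmain
      _ = DF g₀ + (DF g₁ + A q + A a₁ / A b₁) := by rw [heq]
      _ = DF (g₀ + g₁) + A q + A a₁ / A b₁ := by rw [hDFadd]; ring

end HermiteRed


/-- **Hermite reduction.**
Let `K` be a field of characteristic zero and `D` a derivation on `K[t]` mapping `K`
into `K`, extended to a derivation `DF` on the fraction field `K(t)` (modeled as
`RatFunc K`). Let `a, b ∈ K[t]` with `b` monic, `a` and `b` coprime, and every
nonconstant irreducible factor `p` of `b` normal (i.e. `p` and `Dp` coprime). Then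
there exist `g ∈ K(t)` and polynomials `q, a₁, b₁ ∈ K[t]` with `b₁` monic, squarefree,
`b₁ ∣ b` and `deg a₁ < deg b₁` such that `a/b = DF g + q + a₁/b₁` in `K(t)`. -/
theorem hermite_reduction
    {K : Type} [Field K] [CharZero K]
    (D : Polynomial K → Polynomial K)
    (hDadd : ∀ p q : Polynomial K, D (p + q) = D p + D q)
    (hDmul : ∀ p q : Polynomial K, D (p * q) = p * D q + q * D p)
    (hDK : ∀ c : K, ∃ c' : K, D (C c) = C c')
    (DF : RatFunc K → RatFunc K)
    (hDFadd : ∀ f g : RatFunc K, DF (f + g) = DF f + DF g)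
    (hDFmul : ∀ f g : RatFunc K, DF (f * g) = f * DF g + g * DF f)
    (hDFext : ∀ p : Polynomial K,
      DF (algebraMap (Polynomial K) (RatFunc K) p) =
        algebraMap (Polynomial K) (RatFunc K) (D p))
    (a b : Polynomial K) (hb : b.Monic) (hab : IsCoprime a b)
    (hnormal : ∀ p : Polynomial K, Irreducible p → 0 < p.degree → p ∣ b →
      IsCoprime p (D p)) :
    ∃ (g : RatFunc K) (q a₁ b₁ : Polynomial K),
      b₁.Monic ∧ Squarefree b₁ ∧ b₁ ∣ b ∧ a₁.degree < b₁.degree ∧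
      algebraMap (Polynomial K) (RatFunc K) a / algebraMap (Polynomial K) (RatFunc K) b =
        DF g + algebraMap (Polynomial K) (RatFunc K) q +
          algebraMap (Polynomial K) (RatFunc K) a₁ /
            algebraMap (Polynomial K) (RatFunc K) b₁ := by
  exact HermiteRed.aux D hDadd hDmul DF hDFadd hDFmul hDFext
    b.natDegree b le_rfl a hb hnormal
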